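/- Let X be a Poisson random variable with parameter t > 0, i.e., ℙ(X = k) = e^{-t} t^k / k! for every nonnegative integer k. Then for any real x > t, ℙ(X ≥ x) ≤ e^{x − t − x·log(x/t)}. -/
import Mathlib

open MeasureTheory

lemma real_exp_tsum (y : ℝ) : ∑' n : ℕ, y ^ n / n.factorial = Real.exp y := by
  rw [Real.exp_eq_exp_ℝ, NormedSpace.exp_eq_tsum_div]

/-- Chernoff bound for the upper tail of a Poisson random variable:
if `X ~ Poisson(t)` and `x > t` then `ℙ(X ≥ x) ≤ e^{x − t − x log(x/t)}`. -/
theorem poisson_upper_tail {Ω : Type} {mΩ : MeasurableSpace Ω} (μ : Measure Ω)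
    [IsProbabilityMeasure μ]
    (t : ℝ) (ht : 0 < t) (X : Ω → ℕ)
    (hX : ∀ k : ℕ, μ {ω | X ω = k} =
      ENNReal.ofReal (Real.exp (-t) * t ^ k / (Nat.factorial k)))
    (x : ℝ) (hx : t < x) :
    μ {ω | x ≤ (X ω : ℝ)} ≤
      ENNReal.ofReal (Real.exp (x - t - x * Real.log (x / t))) := by
  have hx0 : 0 < x := ht.trans hx
  set l : ℝ := Real.log (x / t) with hl
  have hl0 : 0 < l := Real.log_pos ((one_lt_div ht).2 hx)
  have hel : Real.exp l = x / t := Real.exp_log (by positivity)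
  have hxt : x = t * Real.exp l := by rw [hel]; field_simp
  have hset : {ω | x ≤ (X ω : ℝ)} ⊆ ⋃ k : ℕ, {ω | X ω = k} ∩ {ω | x ≤ (k : ℝ)} := by
    intro ω hω
    exact Set.mem_iUnion.2 ⟨X ω, rfl, hω⟩
  calc μ {ω | x ≤ (X ω : ℝ)}
      ≤ ∑' k : ℕ, μ ({ω | X ω = k} ∩ {ω | x ≤ (k : ℝ)}) :=
        (measure_mono hset).trans (measure_iUnion_le _)
    _ ≤ ∑' k : ℕ, ENNReal.ofReal (Real.exp (-(l * x) - t) * (x ^ k / k.factorial)) := by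
        apply ENNReal.tsum_le_tsum
        intro k
        by_cases h : x ≤ (k : ℝ)
        · have hs : {ω | X ω = k} ∩ {ω | x ≤ (k : ℝ)} = {ω | X ω = k} := by
            ext ω; simp [h]
          rw [hs, hX k]
          apply ENNReal.ofReal_le_ofReal
          have hxk : x ^ k = t ^ k * Real.exp (l * k) := by
            rw [hxt, mul_pow, ← Real.exp_nat_mul]; ring
          rw [hxk]
          have key : Real.exp (-t) ≤ Real.exp (-(l * x) - t) * Real.exp (l * k) := by
            rw [← Real.exp_add]
            apply Real.exp_le_exp.2
            nlinarith [hl0.le, h]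
          have ht' : (0:ℝ) ≤ t ^ k / k.factorial := by positivity
          calc Real.exp (-t) * t ^ k / k.factorial
              = Real.exp (-t) * (t ^ k / k.factorial) := by ring
            _ ≤ (Real.exp (-(l * x) - t) * Real.exp (l * k)) * (t ^ k / k.factorial) :=
                mul_le_mul_of_nonneg_right key ht'
            _ = Real.exp (-(l * x) - t) * (t ^ k * Real.exp (l * k) / k.factorial) := by ring
        · have hs : {ω | X ω = k} ∩ {ω | x ≤ (k : ℝ)} = (∅ : Set Ω) := by
            ext ω; simp only [Set.mem_inter_iff, Set.mem_setOf_eq, Set.mem_empty_iff_false,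
              iff_false, not_and]
            intro _; exact h
          rw [hs]; simp
    _ = ENNReal.ofReal (Real.exp (x - t - x * l)) := by
        rw [← ENNReal.ofReal_tsum_of_nonneg]
        · congr 1
          rw [tsum_mul_left, real_exp_tsum, ← Real.exp_add]
          congr 1; ring
        · intro k; positivity
        · exact (Real.summable_pow_div_factorial x).mul_left _
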